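/- Let (M, p) be a deterministic parity automaton over colors C, with p : M × C → {0,…,n} assigning priorities to transitions, and let W be the language it recognizes (infinite words whose run has even limsup of priorities). Then W is M-prefix-independent and M-cycle-consistent. -/
import Mathlib


/-- Concatenation of a finite word with an infinite word. -/
def app {C : Type*} : List C → (ℕ → C) → (ℕ → C)
  | [], w' => w'
  | c :: u, w' => fun i =>
    match i with
    | 0 => c
    | j + 1 => app u w' j

/-- Extension of the update function of a skeleton to finite words. -/
def updStar {C M : Type*} (upd : M → C → M) (m : M) (w : List C) : M :=
  w.foldl upd m

/-- The infinite word `γ^ω` obtained by repeating a (nonempty) finite word forever. -/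
def periodic {C : Type*} [Inhabited C] (γ : List C) : ℕ → C :=
  fun i => γ.getD (i % γ.length) default

/-- The infinite word obtained by concatenating the (nonempty) finite words
`ws 0, ws 1, ws 2, …`. -/
def concatSeq {C : Type*} [Inhabited C] (ws : ℕ → List C) : ℕ → C :=
  fun i => (((List.range (i + 1)).map ws).flatten).getD i default

/-- `W` is `M`-prefix-independent: any two finite words reaching the same state of the
skeleton from the initial state have the same winning continuations. -/
def PrefIndep {C M : Type*} (upd : M → C → M) (init : M) (W : Set (ℕ → C)) : Prop :=
  ∀ w₁ w₂ : List C, updStar upd init w₁ = updStar upd init w₂ →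
    ∀ w' : ℕ → C, (app w₁ w' ∈ W ↔ app w₂ w' ∈ W)

/-- `W` is `M`-cycle-consistent: after any finite word `w`, any infinite concatenation of
winning (resp. losing) cycles on the state reached by `w` yields a winning (resp. losing)
continuation of `w`. -/
def CycleConsistent {C M : Type*} [Inhabited C] (upd : M → C → M) (init : M)
    (W : Set (ℕ → C)) : Prop :=
  ∀ w : List C, ∀ ws : ℕ → List C,
    (∀ k, ws k ≠ [] ∧ updStar upd (updStar upd init w) (ws k) = updStar upd init w) →
    ((∀ k, app w (periodic (ws k)) ∈ W) → app w (concatSeq ws) ∈ W) ∧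
    ((∀ k, app w (periodic (ws k)) ∉ W) → app w (concatSeq ws) ∉ W)

namespace Stmt2Aux

open Filter List

variable {C M : Type*}

theorem app_add (u : List C) (w' : ℕ → C) (j : ℕ) : app u w' (u.length + j) = w' j := by
  induction u generalizing j with
  | nil => simp [app]
  | cons c u ih =>
    have h : (c :: u).length + j = (u.length + j) + 1 := by simp; omega
    rw [h]
    exact ih j

theorem app_lt (u : List C) (w' : ℕ → C) {i : ℕ} (h : i < u.length) :
    app u w' i = u[i] := by
  induction u generalizing i with
  | nil => simp at h
  | cons c u ih =>
    cases i with
    | zero => rfl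
    | succ j =>
      have : j < u.length := by simpa using h
      simpa [app] using ih this

theorem app_ge (u : List C) (w' : ℕ → C) {i : ℕ} (h : u.length ≤ i) :
    app u w' i = w' (i - u.length) := by
  obtain ⟨j, rfl⟩ := Nat.exists_eq_add_of_le h
  rw [app_add]
  congr 1
  omega

theorem range_map_app (u : List C) (w' : ℕ → C) (j : ℕ) :
    (List.range (u.length + j)).map (app u w') = u ++ (List.range j).map w' := by
  induction u generalizing w' with
  | nil => simp [app]
  | cons c u ih =>
    have h : (c :: u).length + j = (u.length + j) + 1 := by simp; omega
    rw [h, List.range_succ_eq_map, List.map_cons, List.map_map]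
    have h2 : (app (c :: u) w') ∘ Nat.succ = app u w' := rfl
    rw [h2, ih]
    rfl

theorem range_map_app_le (u : List C) (w' : ℕ → C) {r : ℕ} (h : r ≤ u.length) :
    (List.range r).map (app u w') = u.take r := by
  induction u generalizing r with
  | nil =>
    have : r = 0 := by simpa using h
    simp [this]
  | cons c u ih =>
    cases r with
    | zero => simp
    | succ s =>
      have hs : s ≤ u.length := by simpa using h
      rw [List.range_succ_eq_map, List.map_cons, List.map_map]
      have h2 : (app (c :: u) w') ∘ Nat.succ = app u w' := rfl
      rw [h2, ih hs]
      rfl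

theorem updStar_append (upd : M → C → M) (m : M) (u v : List C) :
    updStar upd m (u ++ v) = updStar upd (updStar upd m u) v :=
  by simp [updStar]

def prio (upd : M → C → M) (p : M → C → ℕ) (m : M) (w' : ℕ → C) (i : ℕ) : ℕ :=
  p (updStar upd m ((List.range i).map w')) (w' i)

theorem prio_shift (upd : M → C → M) (p : M → C → ℕ) (m : M) (u : List C) (w' : ℕ → C) (j : ℕ) :
    prio upd p m (app u w') (u.length + j) = prio upd p (updStar upd m u) w' j := by
  unfold prio
  rw [range_map_app, app_add, updStar_append]

theorem prio_lt (upd : M → C → M) (p : M → C → ℕ) (m : M) (u : List C) (w' : ℕ → C)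
    {r : ℕ} (hr : r < u.length) :
    prio upd p m (app u w') r = p (updStar upd m (u.take r)) u[r] := by
  unfold prio
  rw [range_map_app_le u w' hr.le, app_lt u w' hr]

theorem limsup_prio_app (upd : M → C → M) (p : M → C → ℕ) (m : M) (u : List C) (w' : ℕ → C) :
    Filter.atTop.limsup (prio upd p m (app u w')) =
      Filter.atTop.limsup (prio upd p (updStar upd m u) w') := by
  rw [← Filter.limsup_nat_add (prio upd p m (app u w')) u.length]
  congr 1
  funext i
  rw [Nat.add_comm]
  exact prio_shift upd p m u w' i

variable [Inhabited C]

theorem periodic_eq (γ : List C) (hne : γ ≠ []) : periodic γ = app γ (periodic γ) := by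
  have hpos : 0 < γ.length := List.length_pos_iff.mpr hne
  funext i
  by_cases h : i < γ.length
  · rw [app_lt γ _ h]
    unfold periodic
    rw [Nat.mod_eq_of_lt h, List.getD_eq_getElem _ _ h]
  · push_neg at h
    rw [app_ge γ _ h]
    unfold periodic
    rw [← Nat.mod_eq_sub_mod h]

theorem prio_periodic (upd : M → C → M) (p : M → C → ℕ) (m : M) (γ : List C)
    (hne : γ ≠ []) (hcyc : updStar upd m γ = m) (q : ℕ) {r : ℕ} (hr : r < γ.length) :
    prio upd p m (periodic γ) (q * γ.length + r) =
      p (updStar upd m (γ.take r)) γ[r] := by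
  induction q with
  | zero =>
    rw [periodic_eq γ hne]
    simpa using prio_lt upd p m γ (periodic γ) hr
  | succ q ih =>
    have h : (q + 1) * γ.length + r = γ.length + (q * γ.length + r) := by ring
    rw [periodic_eq γ hne, h, prio_shift, hcyc]
    exact ih

/-- prefix of the first `k` blocks -/
def F (ws : ℕ → List C) (k : ℕ) : List C := ((List.range k).map ws).flatten

def Bk (ws : ℕ → List C) (k : ℕ) : ℕ := (F ws k).length

theorem F_succ (ws : ℕ → List C) (k : ℕ) : F ws (k + 1) = F ws k ++ ws k := by
  simp [F, List.range_succ]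

theorem Bk_succ (ws : ℕ → List C) (k : ℕ) : Bk ws (k + 1) = Bk ws k + (ws k).length := by
  simp [Bk, F_succ]

theorem Bk_le (ws : ℕ → List C) (hne : ∀ j, ws j ≠ []) (k : ℕ) : k ≤ Bk ws k := by
  induction k with
  | zero => simp [Bk, F]
  | succ k ih =>
    have := List.length_pos_iff.mpr (hne k)
    rw [Bk_succ]
    omega

theorem Bk_mono (ws : ℕ → List C) {k k' : ℕ} (h : k ≤ k') : Bk ws k ≤ Bk ws k' := by
  obtain ⟨d, rfl⟩ := Nat.exists_eq_add_of_le h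
  clear h
  induction d with
  | zero => exact le_rfl
  | succ d ih =>
    have h2 := Bk_succ ws (k + d)
    rw [show k + (d + 1) = (k + d) + 1 by omega]
    omega

theorem F_prefix (ws : ℕ → List C) {k k' : ℕ} (h : k ≤ k') : F ws k <+: F ws k' := by
  obtain ⟨d, rfl⟩ := Nat.exists_eq_add_of_le h
  clear h
  induction d with
  | zero => exact List.prefix_refl _
  | succ d ih =>
    rw [show k + (d + 1) = (k + d) + 1 by omega, F_succ]
    exact ih.trans (List.prefix_append _ _)

theorem getD_prefix {l₁ l₂ : List C} (h : l₁ <+: l₂) {i : ℕ} (hi : i < l₁.length) :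
    l₂.getD i default = l₁.getD i default := by
  obtain ⟨t, rfl⟩ := h
  exact List.getD_append _ _ _ _ hi

theorem concat_stable (ws : ℕ → List C) (hne : ∀ j, ws j ≠ []) {i k : ℕ} (h : i < Bk ws k) :
    concatSeq ws i = (F ws k).getD i default := by
  have h1 : concatSeq ws i = (F ws (i + 1)).getD i default := rfl
  have hi1 : i < Bk ws (i + 1) := Bk_le ws hne (i + 1)
  rcases le_total (i + 1) k with hk | hk
  · rw [h1, getD_prefix (F_prefix ws hk) hi1]
  · rw [h1, ← getD_prefix (F_prefix ws hk) h]

theorem F_shift (ws : ℕ → List C) (k : ℕ) :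
    F ws (k + 1) = ws 0 ++ F (fun j => ws (j + 1)) k := by
  unfold F
  rw [List.range_succ_eq_map, List.map_cons, List.map_map, List.flatten_cons]
  rfl

theorem Bk_shift (ws : ℕ → List C) (k : ℕ) :
    Bk ws (k + 1) = (ws 0).length + Bk (fun j => ws (j + 1)) k := by
  simp [Bk, F_shift]

theorem concat_decomp (ws : ℕ → List C) (hne : ∀ j, ws j ≠ []) :
    concatSeq ws = app (ws 0) (concatSeq (fun j => ws (j + 1))) := by
  set ws' : ℕ → List C := fun j => ws (j + 1) with hws'
  have hne' : ∀ j, ws' j ≠ [] := fun j => hne (j + 1)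
  funext i
  by_cases h : i < (ws 0).length
  · rw [app_lt _ _ h]
    have h0 : i < Bk ws 1 := by rw [Bk_succ]; simpa [Bk, F] using h
    rw [concat_stable ws hne h0]
    have : F ws 1 = ws 0 := by simp [F, List.range_succ]
    rw [this, List.getD_eq_getElem _ _ h]
  · push_neg at h
    rw [app_ge _ _ h]
    set j := i - (ws 0).length with hj
    have hij : i = (ws 0).length + j := by omega
    have hlt : i < Bk ws (j + 2) := by
      rw [show j + 2 = (j + 1) + 1 by omega, Bk_shift, ← hws']
      have := Bk_le ws' hne' (j + 1)
      omega
    rw [concat_stable ws hne hlt,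
      show j + 2 = (j + 1) + 1 by omega, F_shift ws (j + 1)]
    rw [List.getD_append_right _ _ _ _ h]
    exact (concat_stable ws' hne' (Bk_le ws' hne' (j + 1))).symm

theorem concat_prio (upd : M → C → M) (p : M → C → ℕ) (m : M) :
    ∀ (k : ℕ) (ws : ℕ → List C), (∀ j, ws j ≠ []) → (∀ j, updStar upd m (ws j) = m) →
      ∀ {r : ℕ} (hr : r < (ws k).length),
        prio upd p m (concatSeq ws) (Bk ws k + r) =
          p (updStar upd m ((ws k).take r)) ((ws k)[r]) := by
  intro k
  induction k with
  | zero =>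
    intro ws hne hcyc r hr
    rw [concat_decomp ws hne]
    have h0 : Bk ws 0 = 0 := by simp [Bk, F]
    rw [h0, Nat.zero_add]
    exact prio_lt upd p m (ws 0) _ hr
  | succ k ih =>
    intro ws hne hcyc r hr
    set ws' : ℕ → List C := fun j => ws (j + 1) with hws'
    rw [concat_decomp ws hne]
    have h1 : Bk ws (k + 1) + r = (ws 0).length + (Bk ws' k + r) := by
      rw [Bk_shift, ← hws']; omega
    rw [h1, prio_shift, hcyc 0]
    exact ih ws' (fun j => hne (j + 1)) (fun j => hcyc (j + 1)) hr

theorem exists_block (ws : ℕ → List C) (hne : ∀ j, ws j ≠ []) (i : ℕ) :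
    ∃ k r, r < (ws k).length ∧ i = Bk ws k + r := by
  have hP : ∃ k, i < Bk ws (k + 1) := ⟨i, Bk_le ws hne (i + 1)⟩
  classical
  set k := Nat.find hP with hk
  have hk1 : i < Bk ws (k + 1) := Nat.find_spec hP
  have hk0 : Bk ws k ≤ i := by
    cases hkk : k with
    | zero => simp [Bk, F]
    | succ k' =>
      have := Nat.find_min hP (by omega : k' < k)
      omega
  refine ⟨k, i - Bk ws k, ?_, by omega⟩
  have := Bk_succ ws k
  omega

theorem nbdd {g : ℕ → ℕ} (n : ℕ) (hg : ∀ i, g i ≤ n) :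
    Filter.IsBoundedUnder (· ≤ ·) Filter.atTop g := Filter.isBoundedUnder_of ⟨n, hg⟩

theorem ncob (g : ℕ → ℕ) : Filter.IsCoboundedUnder (· ≤ ·) Filter.atTop g :=
  Filter.IsBoundedUnder.isCoboundedUnder_le
    (Filter.isBoundedUnder_of ⟨0, fun i => Nat.zero_le _⟩)

theorem eventually_le_limsup' {g : ℕ → ℕ} {n : ℕ} (hg : ∀ i, g i ≤ n) :
    ∀ᶠ i in Filter.atTop, g i ≤ Filter.atTop.limsup g := by
  have h := Filter.eventually_lt_of_limsup_lt
    (Nat.lt_succ_self (Filter.atTop.limsup g)) (nbdd n hg)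
  exact h.mono fun i hi => Nat.lt_succ_iff.mp hi

theorem frequently_eq_limsup {g : ℕ → ℕ} {n : ℕ} (hg : ∀ i, g i ≤ n) :
    ∃ᶠ i in Filter.atTop, g i = Filter.atTop.limsup g := by
  have hfreq : ∃ᶠ i in Filter.atTop, Filter.atTop.limsup g ≤ g i := by
    rcases Nat.eq_zero_or_pos (Filter.atTop.limsup g) with h0 | hpos
    · rw [h0]; exact Filter.Frequently.of_forall fun i => Nat.zero_le _
    · have := Filter.frequently_lt_of_lt_limsup (ncob g)
        (show Filter.atTop.limsup g - 1 < Filter.atTop.limsup g by omega)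
      exact this.mono fun i hi => by omega
  exact (hfreq.and_eventually (eventually_le_limsup' hg)).mono
    fun i hi => le_antisymm hi.2 hi.1

end Stmt2Aux

open Stmt2Aux

/-- The language recognized by a deterministic parity automaton `(M, p)`
(acceptance: even `limsup` of the priorities of the transitions along the run) is
`M`-prefix-independent and `M`-cycle-consistent. -/
theorem stmt2 {C M : Type*} [Inhabited C] [Finite M]
    (upd : M → C → M) (init : M) (n : ℕ) (p : M → C → ℕ)
    (hp : ∀ m c, p m c ≤ n) (W : Set (ℕ → C))
    (hW : W = {w | Even (Filter.atTop.limsup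
      (fun i => p (updStar upd init ((List.range i).map w)) (w i)))}) :
    PrefIndep upd init W ∧ CycleConsistent upd init W := by
  have hmem : ∀ (u : List C) (w' : ℕ → C),
      (app u w' ∈ W ↔
        Even (Filter.atTop.limsup (prio upd p (updStar upd init u) w'))) := by
    intro u w'
    rw [hW]
    simp only [Set.mem_setOf_eq]
    show Even (Filter.atTop.limsup (prio upd p init (app u w'))) ↔ _
    rw [limsup_prio_app]
  constructor
  · intro w₁ w₂ h w'
    rw [hmem, hmem, h]
  · intro w ws hws
    have hne : ∀ k, ws k ≠ [] := fun k => (hws k).1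
    have hcyc : ∀ k, updStar upd (updStar upd init w) (ws k) = updStar upd init w :=
      fun k => (hws k).2
    have hgb : ∀ (x : ℕ → C) (i : ℕ), prio upd p (updStar upd init w) x i ≤ n :=
      fun x i => hp _ _
    have key : ∃ k, Filter.atTop.limsup (prio upd p (updStar upd init w) (periodic (ws k)))
        = Filter.atTop.limsup (prio upd p (updStar upd init w) (concatSeq ws)) := by
      set m := updStar upd init w with hm
      obtain ⟨N, hN⟩ := Filter.eventually_atTop.mp
        (eventually_le_limsup' (fun i => hgb (concatSeq ws) i))
      obtain ⟨i, hiB, hiL⟩ :=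
        (Filter.frequently_atTop.mp (frequently_eq_limsup (fun i => hgb (concatSeq ws) i)))
          (Bk ws N)
      obtain ⟨k, r, hr, hi⟩ := exists_block ws hne i
      have hkN : N ≤ k := by
        by_contra hc
        push_neg at hc
        have h1 : Bk ws (k + 1) ≤ Bk ws N := Bk_mono ws (by omega)
        have h2 := Bk_succ ws k
        omega
      refine ⟨k, ?_⟩
      have hlen : 0 < (ws k).length := List.length_pos_iff.mpr (hne k)
      have hkg : prio upd p m (concatSeq ws) i
          = p (updStar upd m ((ws k).take r)) ((ws k)[r]) := by
        rw [hi]; exact concat_prio upd p m k ws hne hcyc hr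
      have hLMk : Filter.atTop.limsup (prio upd p m (concatSeq ws))
          ≤ Filter.atTop.limsup (prio upd p m (periodic (ws k))) := by
        rw [← hiL, hkg]
        apply Filter.le_limsup_of_frequently_le ?_ (nbdd n fun j => hgb _ j)
        rw [Filter.frequently_atTop]
        intro a
        refine ⟨a * (ws k).length + r, ?_, ?_⟩
        · have h3 : a ≤ a * (ws k).length := Nat.le_mul_of_pos_right a hlen
          omega
        · exact le_of_eq (prio_periodic upd p m (ws k) (hne k) (hcyc k) a hr).symm
      have hMkL : Filter.atTop.limsup (prio upd p m (periodic (ws k)))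
          ≤ Filter.atTop.limsup (prio upd p m (concatSeq ws)) := by
        obtain ⟨j, _, hj⟩ :=
          (Filter.frequently_atTop.mp
            (frequently_eq_limsup (fun i => hgb (periodic (ws k)) i))) 0
        have hrj : j % (ws k).length < (ws k).length := Nat.mod_lt _ hlen
        have hval : prio upd p m (periodic (ws k)) j =
            p (updStar upd m ((ws k).take (j % (ws k).length)))
              ((ws k)[j % (ws k).length]) := by
          conv_lhs => rw [show j = (j / (ws k).length) * (ws k).length + j % (ws k).length by
            rw [Nat.mul_comm]; exact (Nat.div_add_mod j _).symm]
          exact prio_periodic upd p m (ws k) (hne k) (hcyc k) _ hrj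
        have hgj : prio upd p m (concatSeq ws) (Bk ws k + j % (ws k).length)
            = prio upd p m (periodic (ws k)) j := by
          rw [hval]; exact concat_prio upd p m k ws hne hcyc hrj
        have hge : N ≤ Bk ws k + j % (ws k).length :=
          le_trans (le_trans hkN (Bk_le ws hne k)) (Nat.le_add_right _ _)
        rw [← hj, ← hgj]
        exact hN _ hge
      exact le_antisymm hMkL hLMk
    constructor
    · intro hwin
      obtain ⟨k, hk⟩ := key
      have h1 := (hmem w (periodic (ws k))).mp (hwin k)
      rw [hk] at h1
      exact (hmem w _).mpr h1
    · intro hlose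
      obtain ⟨k, hk⟩ := key
      intro hcon
      have h1 := (hmem w _).mp hcon
      rw [← hk] at h1
      exact hlose k ((hmem w _).mpr h1)
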